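/- Let σ be a permutation of size n with σₙ = n, and let k be the number of left-to-right maxima of σ. Then the number of permutations τ of size n with B(τ) = σ is exactly 2^(k−1). -/

import Mathlib

/-- One pass of bubblesort on a list of naturals. -/
def bpass : List ℕ → List ℕ
  | [] => []
  | [a] => [a]
  | a :: b :: l => if b < a then b :: bpass (a :: l) else a :: bpass (b :: l)

/-- The identity permutation 1 2 ... n as a list. -/
def idList (n : ℕ) : List ℕ := List.map (· + 1) (List.range n)

/-- `l` is (the word of) a permutation of size `n`, i.e. a rearrangement of 1,...,n. -/
def IsPermList (n : ℕ) (l : List ℕ) : Prop := l.Perm (idList n)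

/-- position `j` of `l` holds a left-to-right maximum. -/
def IsLTRMax (l : List ℕ) (j : ℕ) : Prop :=
  j < l.length ∧ ∀ i < j, l.getD i 0 < l.getD j 0

instance (l : List ℕ) (j : ℕ) : Decidable (IsLTRMax l j) := by
  unfold IsLTRMax; infer_instance

/-- the number of left-to-right maxima of `l`. -/
def ltrCount (l : List ℕ) : ℕ :=
  ((List.range l.length).filter fun j => decide (IsLTRMax l j)).length

/-- the length of the longest suffix of `l` consisting of left-to-right maxima. -/
def suffLen (l : List ℕ) : ℕ :=
  ((List.range l.length).takeWhile fun j => decide (IsLTRMax l (l.length - 1 - j))).length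

/-- `σ` is a node of the tree `T(π)` of iterated bubblesort preimages. -/
def IsNode (n : ℕ) (π σ : List ℕ) : Prop :=
  IsPermList n σ ∧ ∃ j, bpass^[j] σ = π

/-- `σ` is a node of `T(π)` at height `j` (j passes needed to reach π, and no fewer). -/
def IsNodeAt (n : ℕ) (π σ : List ℕ) (j : ℕ) : Prop :=
  IsPermList n σ ∧ bpass^[j] σ = π ∧ ∀ i < j, bpass^[i] σ ≠ π

/-- `τ` is a leaf: it has no child, i.e. no bubblesort preimage other than itself. -/
def IsLeafNode (n : ℕ) (τ : List ℕ) : Prop :=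
  ¬ ∃ ρ, IsPermList n ρ ∧ ρ ≠ τ ∧ bpass ρ = τ

/-- `T(π)` and `T(τ)` are isomorphic as rooted trees: there is a bijection between
their node sets sending root to root and commuting with the parent map `bpass`. -/
def TreeIso (n : ℕ) (π τ : List ℕ) : Prop :=
  ∃ φ : List ℕ → List ℕ,
    (∀ σ, IsNode n π σ → IsNode n τ (φ σ)) ∧
    (∀ σ σ', IsNode n π σ → IsNode n π σ' → φ σ = φ σ' → σ = σ') ∧
    (∀ ρ, IsNode n τ ρ → ∃ σ, IsNode n π σ ∧ φ σ = ρ) ∧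
    φ π = τ ∧
    (∀ σ, IsNode n π σ → σ ≠ π → φ (bpass σ) = bpass (φ σ))

def hcount (c : ℕ) : List ℕ → ℕ
  | [] => 0
  | a :: l => if c < a then 1 + hcount a l else hcount c l

lemma bpass_perm (l : List ℕ) : (bpass l).Perm l := by
  induction l using bpass.induct with
  | case1 => simp [bpass]
  | case2 a => simp [bpass]
  | case3 a b l h ih =>
    simp only [bpass, if_pos h]
    exact (ih.cons b).trans (List.Perm.swap a b l)
  | case4 a b l h ih =>
    simp only [bpass, if_neg h]
    exact ih.cons a

lemma hcount_pos : ∀ (l : List ℕ) (c : ℕ), (∃ x ∈ l, c < x) → 1 ≤ hcount c l := by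
  intro l
  induction l with
  | nil => rintro c ⟨x, hx, -⟩; simp at hx
  | cons a l ih =>
    rintro c ⟨x, hx, hcx⟩
    by_cases hca : c < a
    · simp [hcount, hca]
    · rw [List.mem_cons] at hx
      have hxl : x ∈ l := by
        rcases hx with rfl | h
        · omega
        · exact h
      simpa [hcount, hca] using ih c ⟨x, hxl, hcx⟩

lemma filter_hcount (l : List ℕ) : ∀ c : ℕ,
    ((List.range l.length).filter fun j =>
      decide (c < l.getD j 0 ∧ ∀ i < j, l.getD i 0 < l.getD j 0)).length = hcount c l := by
  induction l with
  | nil => intro c; simp [hcount]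
  | cons a l ih =>
    intro c
    rw [List.length_cons, List.range_succ_eq_map, List.filter_cons, List.filter_map,
      List.filter_congr (q := fun j => decide ((max c a) < l.getD j 0 ∧
        ∀ i < j, l.getD i 0 < l.getD j 0)) ?_]
    · by_cases hca : c < a
      · rw [if_pos (by simp [hca])]
        simp only [List.length_cons, List.length_map, ih, hcount, if_pos hca,
          Nat.max_eq_right (le_of_lt hca)]
        omega
      · rw [if_neg (by simp [hca])]
        simp only [List.length_map, ih, hcount, if_neg hca,
          Nat.max_eq_left (le_of_not_gt hca)]
    · intro j hj
      simp only [Function.comp_apply, decide_eq_decide]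
      constructor
      · rintro ⟨h1, h2⟩
        refine ⟨?_, fun i hi => ?_⟩
        · have ha := h2 0 (Nat.succ_pos j)
          simp only [List.getD_cons_zero, List.getD_cons_succ] at ha h1 ⊢
          omega
        · have := h2 (i+1) (by omega)
          simpa using this
      · rintro ⟨h1, h2⟩
        simp only [List.getD_cons_succ]
        refine ⟨by omega, fun i hi => ?_⟩
        match i with
        | 0 => simp only [List.getD_cons_zero, List.getD_cons_succ] at *; omega
        | i+1 => simpa using h2 i (by omega)

lemma ltrCount_eq_hcount (l : List ℕ) (hpos : ∀ x ∈ l, 0 < x) : ltrCount l = hcount 0 l := by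
  rw [← filter_hcount, ltrCount, List.filter_congr]
  intro j hj
  simp only [List.mem_range] at hj
  simp only [decide_eq_decide, IsLTRMax]
  have hmem : l.getD j 0 ∈ l := by
    rw [List.getD_eq_getElem l 0 hj]; exact List.getElem_mem _
  refine decide_eq_decide.mpr ?_
  constructor
  · rintro ⟨_, h2⟩; exact ⟨hpos _ hmem, h2⟩
  · rintro ⟨_, h2⟩; exact ⟨hj, h2⟩

lemma S_fin (σ : List ℕ) (c : ℕ) : {τ : List ℕ | bpass τ = σ ∧ c < τ.headD 0}.Finite := by
  apply Set.Finite.subset (σ.permutations.toFinset : Finset (List ℕ)).finite_toSet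
  rintro τ ⟨h, -⟩
  simp only [Finset.coe_sort_coe, List.coe_toFinset, Set.mem_setOf_eq, List.mem_permutations]
  exact h ▸ (bpass_perm τ).symm

lemma key : ∀ (σ : List ℕ) (M : ℕ), σ.getLast? = some M → σ.Nodup →
    (∀ x ∈ σ.dropLast, x < M) → ∀ c : ℕ,
    {τ : List ℕ | bpass τ = σ ∧ c < τ.headD 0}.ncard = 2 ^ hcount c σ / 2 := by
  intro σ
  induction σ with
  | nil => intro M hM; simp at hM
  | cons s1 σ' IH =>
    intro M hM hnd hmax c
    rcases eq_or_ne σ' [] with rfl | hσ'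
    · -- base case : σ = [s1]
      have hMs : M = s1 := by simpa using hM.symm
      subst hMs
      have hone : {τ : List ℕ | bpass τ = [M] ∧ c < τ.headD 0}
          = if c < M then {[M]} else ∅ := by
        ext τ
        constructor
        · rintro ⟨h1, h2⟩
          have hlen : τ.length = 1 := by
            rw [← (bpass_perm τ).length_eq, h1]; rfl
          obtain ⟨x, rfl⟩ := List.length_eq_one_iff.mp hlen
          simp only [bpass] at h1
          obtain rfl : x = M := by simpa using h1
          simp only [List.headD_cons] at h2
          simp [if_pos h2]
        · intro hτ
          by_cases hc : c < M
          · rw [if_pos hc] at hτ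
            obtain rfl : τ = [M] := hτ
            exact ⟨by simp [bpass], by simpa⟩
          · rw [if_neg hc] at hτ; exact absurd hτ (by simp)
      rw [hone]
      by_cases hc : c < M
      · simp [if_pos hc, hcount, hc]
      · simp [if_neg hc, hcount, hc]
    · -- inductive step
      have hM' : σ'.getLast? = some M := by
        obtain ⟨b, l, rfl⟩ := List.exists_cons_of_ne_nil hσ'
        simpa using hM
      have hdrop : (s1 :: σ').dropLast = s1 :: σ'.dropLast := by
        obtain ⟨b, l, rfl⟩ := List.exists_cons_of_ne_nil hσ'
        simp
      rw [hdrop] at hmax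
      have hs1M : s1 < M := hmax s1 (List.mem_cons_self)
      have hmax' : ∀ x ∈ σ'.dropLast, x < M := fun x hx => hmax x (List.mem_cons_of_mem _ hx)
      have hnd' : σ'.Nodup := (List.nodup_cons.mp hnd).2
      have hs1nin : s1 ∉ σ' := (List.nodup_cons.mp hnd).1
      have hMmem : M ∈ σ' := by
        obtain ⟨ys, hy⟩ := List.getLast?_eq_some_iff.mp hM'
        rw [hy]; simp
      have hIH := IH M hM' hnd' hmax'
      have hpos1 : 1 ≤ hcount s1 σ' := hcount_pos σ' s1 ⟨M, hMmem, hs1M⟩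
      -- the two building maps
      set g : List ℕ → List ℕ := fun ρ => ρ.headD 0 :: s1 :: ρ.tail with hg
      -- membership in T forces nonempty
      have hTne : ∀ (x : ℕ) (ρ : List ℕ), bpass ρ = σ' → ρ ≠ [] := by
        rintro x ρ h rfl
        exact hσ' (by simpa [bpass] using h.symm)
      -- g-image computation
      have hgim : ∀ (x : ℕ) (ρ : List ℕ),
          ρ ∈ {ρ : List ℕ | bpass ρ = σ' ∧ x < ρ.headD 0} → s1 ≤ x →
          bpass (g ρ) = s1 :: σ' ∧ (g ρ).headD 0 = ρ.headD 0 := by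
        rintro x ρ ⟨h1, h2⟩ hx
        obtain ⟨b, l, rfl⟩ := List.exists_cons_of_ne_nil (hTne x _ h1)
        simp only [List.headD_cons] at h2
        have hs1b : s1 < b := lt_of_le_of_lt hx h2
        constructor
        · show bpass (b :: s1 :: l) = s1 :: σ'
          simp only [bpass, if_pos hs1b]
          rw [h1]
        · simp [hg]
      -- f-image computation
      have hfim : ∀ ρ : List ℕ,
          ρ ∈ {ρ : List ℕ | bpass ρ = σ' ∧ s1 < ρ.headD 0} →
          bpass (s1 :: ρ) = s1 :: σ' := by
        rintro ρ ⟨h1, h2⟩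
        obtain ⟨b, l, rfl⟩ := List.exists_cons_of_ne_nil (hTne s1 _ h1)
        simp only [List.headD_cons] at h2
        show bpass (s1 :: b :: l) = s1 :: σ'
        simp only [bpass, if_neg (by omega : ¬ b < s1)]
        rw [h1]
      -- forward decomposition
      have hfor : ∀ τ : List ℕ, bpass τ = s1 :: σ' →
          (∃ ρ, bpass ρ = σ' ∧ s1 < ρ.headD 0 ∧ τ = s1 :: ρ) ∨
          (∃ ρ, bpass ρ = σ' ∧ s1 < ρ.headD 0 ∧ τ = g ρ) := by
        intro τ h
        rcases τ with _ | ⟨a, _ | ⟨b, l⟩⟩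
        · exact absurd h (by simp [bpass])
        · obtain ⟨-, h2⟩ : s1 = a ∧ σ' = [] := by simpa [bpass] using h.symm
          exact absurd h2 hσ'
        · by_cases hba : b < a
          · simp only [bpass, if_pos hba, List.cons.injEq] at h
            obtain ⟨rfl, h2⟩ := h
            right
            exact ⟨a :: l, h2, by simpa using hba, by simp [hg]⟩
          · simp only [bpass, if_neg hba, List.cons.injEq] at h
            obtain ⟨rfl, h2⟩ := h
            left
            refine ⟨b :: l, h2, ?_, rfl⟩
            have hbmem : b ∈ σ' :=
              (h2 ▸ (bpass_perm (b :: l)).symm : (b :: l).Perm σ').mem_iff.mp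
                (List.mem_cons_self)
            have : b ≠ a := fun hh => hs1nin (hh ▸ hbmem)
            simp only [List.headD_cons]
            omega
      by_cases hcs : c < s1
      · -- set splits into two copies of T s1
        have hset : {τ : List ℕ | bpass τ = s1 :: σ' ∧ c < τ.headD 0}
            = ((s1 :: ·) '' {ρ : List ℕ | bpass ρ = σ' ∧ s1 < ρ.headD 0})
              ∪ (g '' {ρ : List ℕ | bpass ρ = σ' ∧ s1 < ρ.headD 0}) := by
          ext τ
          constructor
          · rintro ⟨h1, h2⟩
            rcases hfor τ h1 with ⟨ρ, hρ1, hρ2, rfl⟩ | ⟨ρ, hρ1, hρ2, rfl⟩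
            · exact Or.inl ⟨ρ, ⟨hρ1, hρ2⟩, rfl⟩
            · exact Or.inr ⟨ρ, ⟨hρ1, hρ2⟩, rfl⟩
          · rintro (⟨ρ, hρ, rfl⟩ | ⟨ρ, hρ, rfl⟩)
            · exact ⟨hfim ρ hρ, by simpa using hcs⟩
            · obtain ⟨hb1, hb2⟩ := hgim s1 ρ hρ le_rfl
              exact ⟨hb1, by rw [hb2]; exact lt_trans hcs hρ.2⟩
        have hinjg : Set.InjOn g {ρ : List ℕ | bpass ρ = σ' ∧ s1 < ρ.headD 0} := by
          rintro ρ1 ⟨h1, -⟩ ρ2 ⟨h2, -⟩ heq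
          obtain ⟨b1, l1, rfl⟩ := List.exists_cons_of_ne_nil (hTne s1 _ h1)
          obtain ⟨b2, l2, rfl⟩ := List.exists_cons_of_ne_nil (hTne s1 _ h2)
          simpa [hg] using heq
        have hinjf : Set.InjOn (s1 :: ·) {ρ : List ℕ | bpass ρ = σ' ∧ s1 < ρ.headD 0} :=
          fun ρ1 _ ρ2 _ h => by simpa using h
        have hdisj : Disjoint ((s1 :: ·) '' {ρ : List ℕ | bpass ρ = σ' ∧ s1 < ρ.headD 0})
            (g '' {ρ : List ℕ | bpass ρ = σ' ∧ s1 < ρ.headD 0}) := by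
          rw [Set.disjoint_left]
          rintro τ ⟨ρ1, hρ1, rfl⟩ ⟨ρ2, hρ2, heq⟩
          obtain ⟨-, hh2⟩ := hgim s1 ρ2 hρ2 le_rfl
          rw [heq] at hh2
          simp only [List.headD_cons] at hh2
          have := hρ2.2
          omega
        rw [hset, Set.ncard_union_eq hdisj ((S_fin σ' s1).image _) ((S_fin σ' s1).image _),
          Set.ncard_image_of_injOn hinjf, Set.ncard_image_of_injOn hinjg, hIH s1]
        obtain ⟨m, hm⟩ := Nat.exists_eq_add_of_le hpos1
        rw [show hcount c (s1 :: σ') = 1 + hcount s1 σ' from by simp [hcount, hcs], hm]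
        simp only [pow_add, pow_one]
        omega
      · -- c ≥ s1 : only the g-copy
        have hset : {τ : List ℕ | bpass τ = s1 :: σ' ∧ c < τ.headD 0}
            = g '' {ρ : List ℕ | bpass ρ = σ' ∧ c < ρ.headD 0} := by
          ext τ
          constructor
          · rintro ⟨h1, h2⟩
            rcases hfor τ h1 with ⟨ρ, hρ1, hρ2, rfl⟩ | ⟨ρ, hρ1, hρ2, rfl⟩
            · simp only [List.headD_cons] at h2; omega
            · refine ⟨ρ, ⟨hρ1, ?_⟩, rfl⟩
              obtain ⟨-, hh2⟩ := hgim s1 ρ ⟨hρ1, hρ2⟩ le_rfl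
              rw [← hh2]; exact h2
          · rintro ⟨ρ, hρ, rfl⟩
            have hρ' : ρ ∈ {ρ : List ℕ | bpass ρ = σ' ∧ s1 < ρ.headD 0} :=
              ⟨hρ.1, by have := hρ.2; omega⟩
            obtain ⟨hb1, hb2⟩ := hgim s1 ρ hρ' le_rfl
            exact ⟨hb1, by rw [hb2]; exact hρ.2⟩
        have hinjg : Set.InjOn g {ρ : List ℕ | bpass ρ = σ' ∧ c < ρ.headD 0} := by
          rintro ρ1 ⟨h1, -⟩ ρ2 ⟨h2, -⟩ heq
          obtain ⟨b1, l1, rfl⟩ := List.exists_cons_of_ne_nil (hTne c _ h1)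
          obtain ⟨b2, l2, rfl⟩ := List.exists_cons_of_ne_nil (hTne c _ h2)
          simpa [hg] using heq
        rw [hset, Set.ncard_image_of_injOn hinjg, hIH c,
          show hcount c (s1 :: σ') = hcount c σ' from by simp [hcount, hcs]]

/-- A permutation of size `n` ending with `n` and having `k` left-to-right maxima
has exactly `2^(k-1)` preimages under bubblesort. -/
theorem stmt_3 (n k : ℕ) (σ : List ℕ) (hσ : IsPermList n σ)
    (hlast : σ.getLast? = some n) (hk : ltrCount σ = k) :
    Set.ncard {τ : List ℕ | IsPermList n τ ∧ bpass τ = σ} = 2 ^ (k - 1) := by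
  have hmemid : ∀ x ∈ idList n, 0 < x ∧ x ≤ n := by
    intro x hx
    simp only [idList, List.mem_map, List.mem_range] at hx
    obtain ⟨i, hi, rfl⟩ := hx
    omega
  have hmemσ : ∀ x ∈ σ, 0 < x ∧ x ≤ n := fun x hx => hmemid x (hσ.mem_iff.mp hx)
  have hnd : σ.Nodup := hσ.nodup_iff.mpr (by
    apply List.Nodup.map
    · intro a b h; simp only [] at h; omega
    · exact List.nodup_range)
  obtain ⟨ys, hys⟩ := List.getLast?_eq_some_iff.mp hlast
  have hmax : ∀ x ∈ σ.dropLast, x < n := by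
    intro x hx
    rw [hys, List.dropLast_concat] at hx
    have hxn : x ≤ n := (hmemσ x (by rw [hys]; exact List.mem_append_left _ hx)).2
    have : n ∉ ys := by
      rw [hys] at hnd
      exact fun hmem => (List.disjoint_of_nodup_append hnd) hmem (by simp)
    exact lt_of_le_of_ne hxn (fun h => this (h ▸ hx))
  have hnσ : n ∈ σ := by rw [hys]; simp
  have hn0 : 0 < n := (hmemσ n hnσ).1
  have hsetEq : {τ : List ℕ | IsPermList n τ ∧ bpass τ = σ}
      = {τ : List ℕ | bpass τ = σ ∧ 0 < τ.headD 0} := by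
    ext τ
    constructor
    · rintro ⟨hp, hb⟩
      refine ⟨hb, ?_⟩
      have hτne : τ ≠ [] := by
        rintro rfl
        rw [hys] at hb
        exact absurd hb.symm (by simp [bpass])
      obtain ⟨a, t, rfl⟩ := List.exists_cons_of_ne_nil hτne
      exact (hmemid a (hp.mem_iff.mp (List.mem_cons_self))).1
    · rintro ⟨hb, -⟩
      exact ⟨(hb ▸ (bpass_perm τ).symm : τ.Perm σ).trans hσ, hb⟩
  rw [hsetEq, key σ n hlast hnd hmax 0]
  rw [ltrCount_eq_hcount σ (fun x hx => (hmemσ x hx).1)] at hk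
  have hk1 : 1 ≤ hcount 0 σ := hcount_pos σ 0 ⟨n, hnσ, hn0⟩
  rw [hk]
  obtain ⟨m, hm⟩ : ∃ m, k = m + 1 := ⟨k - 1, by omega⟩
  rw [hm]
  simp [pow_succ]
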